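/- arXiv:1811.02383 — 3 statements merged into one kernel-verified Lean document; each statement's English description precedes it below -/
import Mathlib

section
/- Let $\mathring\sigma$ be the round metric on the unit sphere $S^2$ with covariant derivative $\mathring\nabla$, and let $F_{AB} = (\mathring\nabla_A\mathring\nabla_B - \tfrac{1}{2}\mathring\sigma_{AB}\mathring\Delta)c$ for a smooth function $c$ on $S^2$. Then $\mathring\nabla_A F_{BD} - \mathring\nabla_B F_{AD} = \mathring\nabla^E F_{BE}\,\mathring\sigma_{AD} - \mathring\nabla^E F_{AE}\,\mathring\sigma_{BD}$. -/
open scoped BigOperators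

noncomputable section

/-- The Levi-Civita symbol on three indices. -/
def lev3 (i j k : Fin 3) : ℝ :=
  if (i, j, k) = ((0 : Fin 3), (1 : Fin 3), (2 : Fin 3)) ∨
     (i, j, k) = ((1 : Fin 3), (2 : Fin 3), (0 : Fin 3)) ∨
     (i, j, k) = ((2 : Fin 3), (0 : Fin 3), (1 : Fin 3)) then 1
  else if (i, j, k) = ((0 : Fin 3), (2 : Fin 3), (1 : Fin 3)) ∨
     (i, j, k) = ((2 : Fin 3), (1 : Fin 3), (0 : Fin 3)) ∨
     (i, j, k) = ((1 : Fin 3), (0 : Fin 3), (2 : Fin 3)) then -1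
  else 0

/-- Abstract tensor calculus on the round unit two-sphere `(S², σ̊)`.
`Pt` is the set of points, `g` the round metric `σ̊_{AB}`, `ginv` its inverse `σ̊^{AB}`,
`eps` the area form `ε̊_{AB}`, `d0`, `d1`, `d2`, `d3` the Levi-Civita covariant derivative
`∇̊` acting on functions, covectors, 2-tensors and 3-tensors (the first index of the result
is the derivative index), `integral` is integration against the round area measure, and
`Xc i` are the three restricted Cartesian coordinate functions (first eigenfunctions).
The axioms record the standard facts on the unit round sphere: symmetry of `σ̊`, the
inverse-metric relation, antisymmetry of `ε̊` and the `ε̊ε̊ = σ̊σ̊ - σ̊σ̊` identity,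
linearity and Leibniz rules for `∇̊`, parallelism of `σ̊` and `ε̊`, commutation of `∇̊` with
`σ̊`-contractions, symmetry of Hessians, the Ricci commutation identities with Gauss
curvature `1`, the divergence theorem, linearity of the integral, the characterizing
properties of the coordinate functions, and solvability/kernel facts for `Δ̊ + 2`. -/
structure Sphere2 where
  Pt : Type
  g : Fin 2 → Fin 2 → Pt → ℝ
  ginv : Fin 2 → Fin 2 → Pt → ℝ
  eps : Fin 2 → Fin 2 → Pt → ℝ
  d0 : (Pt → ℝ) → (Fin 2 → Pt → ℝ)
  d1 : (Fin 2 → Pt → ℝ) → (Fin 2 → Fin 2 → Pt → ℝ)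
  d2 : (Fin 2 → Fin 2 → Pt → ℝ) → (Fin 2 → Fin 2 → Fin 2 → Pt → ℝ)
  d3 : (Fin 2 → Fin 2 → Fin 2 → Pt → ℝ) → (Fin 2 → Fin 2 → Fin 2 → Fin 2 → Pt → ℝ)
  integral : (Pt → ℝ) → ℝ
  Xc : Fin 3 → Pt → ℝ
  g_symm : ∀ A B, g A B = g B A
  ginv_symm : ∀ A B, ginv A B = ginv B A
  g_ginv : ∀ A B x, (∑ C : Fin 2, g A C x * ginv C B x) = if A = B then (1 : ℝ) else 0
  eps_antisymm : ∀ A B x, eps A B x = - eps B A x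
  eps_eps : ∀ A B C E x, eps A B x * eps C E x = g A C x * g B E x - g A E x * g B C x
  d0_add : ∀ f h, d0 (fun x => f x + h x) = fun A x => d0 f A x + d0 h A x
  d0_mul : ∀ f h, d0 (fun x => f x * h x) = fun A x => d0 f A x * h x + f x * d0 h A x
  d0_const : ∀ r : ℝ, d0 (fun _ => r) = fun _ _ => 0
  d1_add : ∀ ω η, d1 (fun B x => ω B x + η B x) = fun A B x => d1 ω A B x + d1 η A B x
  d1_fun_smul : ∀ (f : Pt → ℝ) ω,
    d1 (fun B x => f x * ω B x) = fun A B x => d0 f A x * ω B x + f x * d1 ω A B x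
  d2_add : ∀ T S, d2 (fun B C x => T B C x + S B C x)
    = fun A B C x => d2 T A B C x + d2 S A B C x
  d2_fun_smul : ∀ (f : Pt → ℝ) T,
    d2 (fun B C x => f x * T B C x) = fun A B C x => d0 f A x * T B C x + f x * d2 T A B C x
  d2_tensor : ∀ ω η, d2 (fun B C x => ω B x * η C x)
    = fun A B C x => d1 ω A B x * η C x + ω B x * d1 η A C x
  d3_add : ∀ T S, d3 (fun B C E x => T B C E x + S B C E x)
    = fun A B C E x => d3 T A B C E x + d3 S A B C E x
  d3_tensor : ∀ ω T, d3 (fun B C E x => ω B x * T C E x)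
    = fun A B C E x => d1 ω A B x * T C E x + ω B x * d2 T A C E x
  g_parallel : ∀ A B C x, d2 g A B C x = 0
  eps_parallel : ∀ A B C x, d2 eps A B C x = 0
  ginv_contract_d0 : ∀ (T : Fin 2 → Fin 2 → Pt → ℝ) A x,
    d0 (fun y => ∑ B : Fin 2, ∑ C : Fin 2, ginv B C y * T B C y) A x
      = ∑ B : Fin 2, ∑ C : Fin 2, ginv B C x * d2 T A B C x
  ginv_contract_d1 : ∀ (U : Fin 2 → Fin 2 → Fin 2 → Pt → ℝ) A E x,
    d1 (fun C y => ∑ B : Fin 2, ∑ B' : Fin 2, ginv B B' y * U B B' C y) A E x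
      = ∑ B : Fin 2, ∑ B' : Fin 2, ginv B B' x * d3 U A B B' E x
  hess_symm : ∀ f A B x, d1 (d0 f) A B x = d1 (d0 f) B A x
  ricci1 : ∀ ω A B C x,
    d2 (d1 ω) A B C x - d2 (d1 ω) B A C x = g B C x * ω A x - g A C x * ω B x
  ricci2 : ∀ T A B C E x,
    d3 (d2 T) A B C E x - d3 (d2 T) B A C E x
      = g B C x * T A E x - g A C x * T B E x + g B E x * T C A x - g A E x * T C B x
  divergence_thm : ∀ ω : Fin 2 → Pt → ℝ,
    integral (fun x => ∑ A : Fin 2, ∑ B : Fin 2, ginv A B x * d1 ω A B x) = 0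
  integral_add : ∀ f h, integral (fun x => f x + h x) = integral f + integral h
  integral_smul : ∀ (r : ℝ) f, integral (fun x => r * f x) = r * integral f
  Xc_sq : ∀ x, (∑ i : Fin 3, Xc i x * Xc i x) = 1
  Xc_hess : ∀ i A B x, d1 (d0 (Xc i)) A B x = - g A B x * Xc i x
  Xc_grad : ∀ i j x,
    (∑ A : Fin 2, ∑ B : Fin 2, ginv A B x * d0 (Xc i) A x * d0 (Xc j) B x)
      = (if i = j then (1 : ℝ) else 0) - Xc i x * Xc j x
  Xc_eps : ∀ i A x,
    (∑ B : Fin 2, ∑ B' : Fin 2, eps A B x * ginv B B' x * d0 (Xc i) B' x)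
      = ∑ j : Fin 3, ∑ k : Fin 3, lev3 i j k * Xc j x * d0 (Xc k) A x
  lap_two_surj : ∀ h : Pt → ℝ,
    (∀ i : Fin 3, integral (fun x => h x * Xc i x) = 0) →
    ∃ u : Pt → ℝ, ∀ x,
      (∑ A : Fin 2, ∑ B : Fin 2, ginv A B x * d1 (d0 u) A B x) + 2 * u x = h x
  lap_two_ker : ∀ u : Pt → ℝ,
    (∀ x, (∑ A : Fin 2, ∑ B : Fin 2, ginv A B x * d1 (d0 u) A B x) + 2 * u x = 0) →
    ∃ f : Fin 3 → ℝ, ∀ x, u x = ∑ i : Fin 3, f i * Xc i x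

namespace Sphere2

variable (D : Sphere2)

/-- The Hessian `∇̊_A ∇̊_B f` of a function. -/
def hess (f : D.Pt → ℝ) : Fin 2 → Fin 2 → D.Pt → ℝ := D.d1 (D.d0 f)

/-- The Laplace–Beltrami operator `Δ̊ f = σ̊^{AB} ∇̊_A ∇̊_B f`. -/
def lap (f : D.Pt → ℝ) : D.Pt → ℝ :=
  fun x => ∑ A : Fin 2, ∑ B : Fin 2, D.ginv A B x * D.hess f A B x

/-- The trace-free Hessian `F_{AB} = (∇̊_A ∇̊_B - (1/2) σ̊_{AB} Δ̊) c`. -/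
def Ften (c : D.Pt → ℝ) : Fin 2 → Fin 2 → D.Pt → ℝ :=
  fun A B x => D.hess c A B x - (1 / 2) * D.g A B x * D.lap c x

/-- The rotated (symmetrized) Hessian
`F̲_{AB} = (1/2)(ε̊_{AD} ∇̊^D ∇̊_B + ε̊_{BD} ∇̊^D ∇̊_A) c̲`. -/
def Fbar (c : D.Pt → ℝ) : Fin 2 → Fin 2 → D.Pt → ℝ :=
  fun A B x => (1 / 2) *
    ((∑ E : Fin 2, ∑ E' : Fin 2, D.eps A E x * D.ginv E E' x * D.hess c E' B x)
      + (∑ E : Fin 2, ∑ E' : Fin 2, D.eps B E x * D.ginv E E' x * D.hess c E' A x))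

/-- The shear-type tensor `C_{AB} = F_{AB} + F̲_{AB}` with potentials `c, c̲`. -/
def Cten (c cb : D.Pt → ℝ) : Fin 2 → Fin 2 → D.Pt → ℝ :=
  fun A B x => D.Ften c A B x + D.Fbar cb A B x

/-- The covariant divergence `∇̊_A V^A = σ̊^{AA'} ∇̊_{A'} V_A` of a (lowered) vector field. -/
def divV (V : Fin 2 → D.Pt → ℝ) : D.Pt → ℝ :=
  fun x => ∑ A : Fin 2, ∑ A' : Fin 2, D.ginv A A' x * D.d1 V A' A x

end Sphere2

namespace Sphere2

variable (D : Sphere2)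

private lemma d2F_eq (c : D.Pt → ℝ) (A B C : Fin 2) (x : D.Pt) :
    D.d2 (D.Ften c) A B C x
      = D.d2 (D.d1 (D.d0 c)) A B C x - (1/2) * D.d0 (D.lap c) A x * D.g B C x := by
  have hf : D.Ften c
      = fun B C y => D.d1 (D.d0 c) B C y + -(1/2) * D.lap c y * D.g B C y := by
    funext B C y
    simp only [Sphere2.Ften, Sphere2.hess]
    ring
  rw [hf]
  have h1 := congrFun (congrFun (congrFun (congrFun
      (D.d2_add (D.d1 (D.d0 c)) (fun B C y => -(1/2) * D.lap c y * D.g B C y)) A) B) C) x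
  have h2 := congrFun (congrFun (congrFun (congrFun
      (D.d2_fun_smul (fun z => -(1/2) * D.lap c z) D.g) A) B) C) x
  have h3 := congrFun (congrFun (D.d0_mul (fun _ => -(1/2)) (D.lap c)) A) x
  have h4 := congrFun (congrFun (D.d0_const (-(1/2))) A) x
  have h5 := D.g_parallel A B C x
  beta_reduce at h1 h2 h3 h4
  rw [h1, h2, h3, h4, h5]
  ring

private lemma contract (v : Fin 2 → ℝ) (B : Fin 2) (x : D.Pt) :
    (∑ E : Fin 2, ∑ E' : Fin 2, D.ginv E E' x * v E' * D.g B E x) = v B := by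
  fin_cases B
  · have h0 := D.g_ginv 0 0 x
    have h1 := D.g_ginv 0 1 x
    simp only [Fin.mk_zero, Fin.mk_one, Fin.sum_univ_two] at h0 h1 ⊢
    norm_num at h0 h1
    linear_combination v 0 * h0 + v 1 * h1
  · have h0 := D.g_ginv 1 0 x
    have h1 := D.g_ginv 1 1 x
    simp only [Fin.mk_zero, Fin.mk_one, Fin.sum_univ_two] at h0 h1 ⊢
    norm_num at h0 h1
    linear_combination v 0 * h0 + v 1 * h1

private lemma traceg (x : D.Pt) :
    (∑ E : Fin 2, ∑ E' : Fin 2, D.ginv E E' x * D.g E' E x) = 2 := by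
  have h0 := D.g_ginv 0 0 x
  have h1 := D.g_ginv 1 1 x
  simp only [Fin.sum_univ_two] at h0 h1 ⊢
  norm_num at h0 h1
  linear_combination h0 + h1

private lemma gradlap (c : D.Pt → ℝ) (A : Fin 2) (x : D.Pt) :
    D.d0 (D.lap c) A x
      = ∑ E : Fin 2, ∑ E' : Fin 2, D.ginv E E' x * D.d2 (D.d1 (D.d0 c)) A E E' x :=
  D.ginv_contract_d0 (D.d1 (D.d0 c)) A x

private lemma hL3 (c : D.Pt → ℝ) (B : Fin 2) (x : D.Pt) :
    (∑ E : Fin 2, ∑ E' : Fin 2, D.ginv E E' x * D.d2 (D.d1 (D.d0 c)) B E' E x)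
      = D.d0 (D.lap c) B x := by
  have h := D.gradlap c B x
  have gs := congrFun (D.ginv_symm 0 1) x
  simp only [Fin.sum_univ_two] at h ⊢
  linear_combination -h + (D.d2 (D.d1 (D.d0 c)) B 1 0 x - D.d2 (D.d1 (D.d0 c)) B 0 1 x) * gs

private lemma divF (c : D.Pt → ℝ) (B : Fin 2) (x : D.Pt) :
    (∑ E : Fin 2, ∑ E' : Fin 2, D.ginv E E' x * D.d2 (D.Ften c) E' B E x)
      = (1/2) * D.d0 (D.lap c) B x - D.d0 c B x := by
  have hd2 : ∀ E' E : Fin 2, D.d2 (D.Ften c) E' B E x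
      = D.d2 (D.d1 (D.d0 c)) E' B E x - (1/2) * D.d0 (D.lap c) E' x * D.g B E x :=
    fun E' E => D.d2F_eq c E' B E x
  have r : ∀ a b : Fin 2,
      D.d2 (D.d1 (D.d0 c)) a B b x - D.d2 (D.d1 (D.d0 c)) B a b x
        = D.g B b x * D.d0 c a x - D.g a b x * D.d0 c B x :=
    fun a b => D.ricci1 (D.d0 c) a B b x
  have h3 := D.hL3 c B x
  have hc := D.contract (fun E' => D.d0 c E' x) B x
  have hs2 := D.contract (fun E' => D.d0 (D.lap c) E' x) B x
  have htr := D.traceg x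
  simp only [Fin.sum_univ_two] at h3 hc hs2 htr ⊢
  linear_combination
    D.ginv 0 0 x * hd2 0 0 + D.ginv 0 1 x * hd2 1 0
      + D.ginv 1 0 x * hd2 0 1 + D.ginv 1 1 x * hd2 1 1
    + D.ginv 0 0 x * r 0 0 + D.ginv 0 1 x * r 1 0
      + D.ginv 1 0 x * r 0 1 + D.ginv 1 1 x * r 1 1
    + h3 + hc - D.d0 c B x * htr - (1/2) * hs2

end Sphere2


/-- Commutation identity for the trace-free Hessian `F_{AB}` on the round unit sphere:
`∇̊_A F_{BD} - ∇̊_B F_{AD} = ∇̊^E F_{BE} σ̊_{AD} - ∇̊^E F_{AE} σ̊_{BD}`. -/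
theorem stmt_0 (D : Sphere2) (c : D.Pt → ℝ) (A B C : Fin 2) (x : D.Pt) :
    D.d2 (D.Ften c) A B C x - D.d2 (D.Ften c) B A C x
      = (∑ E : Fin 2, ∑ E' : Fin 2, D.ginv E E' x * D.d2 (D.Ften c) E' B E x) * D.g A C x
        - (∑ E : Fin 2, ∑ E' : Fin 2, D.ginv E E' x * D.d2 (D.Ften c) E' A E x) * D.g B C x := by
  have h1 := D.d2F_eq c A B C x
  have h2 := D.d2F_eq c B A C x
  have r := D.ricci1 (D.d0 c) A B C x
  have hA := D.divF c A x
  have hB := D.divF c B x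
  linear_combination h1 - h2 + r - D.g A C x * hB + D.g B C x * hA
end
end

section
/- For a symmetric trace-free 2-tensor $C_{AB} = F_{AB} + \underline{F}_{AB}$ on the round unit sphere, given by potentials $c$ and $\underline{c}$ as trace-free Hessian and rotated Hessian respectively, the pointwise identity $\mathring\nabla_A C_{BD}\,\mathring\nabla^A C^{BD} = \mathring\nabla_A C_{BD}\,\mathring\nabla^B C^{AD} + \mathring\nabla^B C_{AB}\,\mathring\nabla_D C^{AD}$ holds. -/
open scoped BigOperators

noncomputable section

/-- Auxiliary: trace of the inverse metric against the metric is `2`. -/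
lemma aux_trace_g (D : Sphere2) (y : D.Pt) :
    (∑ B : Fin 2, ∑ C : Fin 2, D.ginv B C y * D.g B C y) = 2 := by
  have h0 := D.g_ginv 0 0 y
  have h1 := D.g_ginv 1 1 y
  simp only [Fin.sum_univ_two] at h0 h1 ⊢
  have gs : D.g 1 0 y = D.g 0 1 y := D.g_symm 1 0 ▸ rfl
  have gis : D.ginv 1 0 y = D.ginv 0 1 y := D.ginv_symm 1 0 ▸ rfl
  simp only [gs, gis, if_true, reduceIte] at h0 h1 ⊢
  linear_combination h0 + h1

/-- Auxiliary: `C_{AB}` is trace-free pointwise. -/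
lemma aux_trace_C (D : Sphere2) (c cb : D.Pt → ℝ) (y : D.Pt) :
    (∑ B : Fin 2, ∑ C : Fin 2, D.ginv B C y * D.Cten c cb B C y) = 0 := by
  have trg := aux_trace_g D y
  have e00 : D.eps 0 0 y = 0 := by have := D.eps_antisymm 0 0 y; linarith
  have e11 : D.eps 1 1 y = 0 := by have := D.eps_antisymm 1 1 y; linarith
  have e10 : D.eps 1 0 y = - D.eps 0 1 y := D.eps_antisymm 1 0 y
  have gs : D.g 1 0 y = D.g 0 1 y := D.g_symm 1 0 ▸ rfl
  have gis : D.ginv 1 0 y = D.ginv 0 1 y := D.ginv_symm 1 0 ▸ rfl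
  have hsc : D.d1 (D.d0 c) 1 0 y = D.d1 (D.d0 c) 0 1 y := D.hess_symm c 1 0 y
  have hscb : D.d1 (D.d0 cb) 1 0 y = D.d1 (D.d0 cb) 0 1 y := D.hess_symm cb 1 0 y
  simp only [Sphere2.Cten, Sphere2.Ften, Sphere2.Fbar, Sphere2.lap, Sphere2.hess,
    Fin.sum_univ_two] at trg ⊢
  simp only [e00, e11, e10, gs, gis, hsc, hscb] at trg ⊢
  linear_combination (-(1/2) * (D.ginv 0 0 y * D.d1 (D.d0 c) 0 0 y
    + 2 * D.ginv 0 1 y * D.d1 (D.d0 c) 0 1 y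
    + D.ginv 1 1 y * D.d1 (D.d0 c) 1 1 y)) * trg

/-- Auxiliary: the derivative of `C_{AB}` is trace-free on its last two indices. -/
lemma aux_trace_dC (D : Sphere2) (c cb : D.Pt → ℝ) (A : Fin 2) (x : D.Pt) :
    (∑ B : Fin 2, ∑ C : Fin 2, D.ginv B C x * D.d2 (D.Cten c cb) A B C x) = 0 := by
  have h := D.ginv_contract_d0 (D.Cten c cb) A x
  have hz : (fun y => ∑ B : Fin 2, ∑ C : Fin 2, D.ginv B C y * D.Cten c cb B C y)
      = (fun _ => (0 : ℝ)) := funext fun y => aux_trace_C D c cb y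
  rw [hz, D.d0_const 0] at h
  exact h.symm

/-- The purely algebraic pointwise identity for a 3-tensor trace-free in its
last two indices, in two dimensions. -/
lemma aux_key (G : Fin 2 → Fin 2 → ℝ) (T : Fin 2 → Fin 2 → Fin 2 → ℝ)
    (hG : G 1 0 = G 0 1)
    (ht : ∀ A : Fin 2, (∑ B : Fin 2, ∑ C : Fin 2, G B C * T A B C) = 0) :
    (∑ A : Fin 2, ∑ A' : Fin 2, ∑ B : Fin 2, ∑ B' : Fin 2, ∑ Dd : Fin 2, ∑ D' : Fin 2,
        G A A' * G B B' * G Dd D' * T A B Dd * T A' B' D')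
    = (∑ A : Fin 2, ∑ A' : Fin 2, ∑ B : Fin 2, ∑ B' : Fin 2, ∑ Dd : Fin 2, ∑ D' : Fin 2,
        G A A' * G B B' * G Dd D' * T A B Dd * T B' A' D')
      + (∑ A : Fin 2, ∑ A' : Fin 2, ∑ B : Fin 2, ∑ B' : Fin 2, ∑ Dd : Fin 2, ∑ D' : Fin 2,
        G A A' * G B B' * G Dd D' * T B' A B * T Dd A' D') := by
  have ht0 := ht 0
  have ht1 := ht 1
  simp only [Fin.sum_univ_two] at ht0 ht1 ⊢
  simp only [hG] at ht0 ht1 ⊢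
  linear_combination ((-1) * G 0 0 * G 0 0 * T 0 0 0 + (-1) * G 0 0 * G 0 1 * T 0 0 1 + (-1) * G 0 0 * G 0 1 * T 0 1 0 + (-1) * G 0 0 * G 0 1 * T 1 0 0 + G 0 0 * G 1 1 * T 0 1 1 + (-2) * G 0 0 * G 1 1 * T 1 0 1 + (-2) * G 0 1 * G 0 1 * T 0 1 1 + G 0 1 * G 0 1 * T 1 0 1 + (-1) * G 0 1 * G 0 1 * T 1 1 0 + (-1) * G 0 1 * G 1 1 * T 1 1 1) * ht0 + ((-1) * G 0 0 * G 0 1 * T 0 0 0 + (-2) * G 0 0 * G 1 1 * T 0 1 0 + G 0 0 * G 1 1 * T 1 0 0 + (-1) * G 0 1 * G 0 1 * T 0 0 1 + G 0 1 * G 0 1 * T 0 1 0 + (-2) * G 0 1 * G 0 1 * T 1 0 0 + (-1) * G 0 1 * G 1 1 * T 0 1 1 + (-1) * G 0 1 * G 1 1 * T 1 0 1 + (-1) * G 0 1 * G 1 1 * T 1 1 0 + (-1) * G 1 1 * G 1 1 * T 1 1 1) * ht1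

/-- For `C_{AB} = F_{AB} + F̲_{AB}` on the round unit sphere, the pointwise identity
`∇̊_A C_{BD} ∇̊^A C^{BD} = ∇̊_A C_{BD} ∇̊^B C^{AD} + ∇̊^B C_{AB} ∇̊_D C^{AD}` holds. -/
theorem stmt_6 (D : Sphere2) (c cb : D.Pt → ℝ) (x : D.Pt) :
    (∑ A : Fin 2, ∑ A' : Fin 2, ∑ B : Fin 2, ∑ B' : Fin 2, ∑ Dd : Fin 2, ∑ D' : Fin 2,
        D.ginv A A' x * D.ginv B B' x * D.ginv Dd D' x
          * D.d2 (D.Cten c cb) A B Dd x * D.d2 (D.Cten c cb) A' B' D' x)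
    = (∑ A : Fin 2, ∑ A' : Fin 2, ∑ B : Fin 2, ∑ B' : Fin 2, ∑ Dd : Fin 2, ∑ D' : Fin 2,
        D.ginv A A' x * D.ginv B B' x * D.ginv Dd D' x
          * D.d2 (D.Cten c cb) A B Dd x * D.d2 (D.Cten c cb) B' A' D' x)
      + (∑ A : Fin 2, ∑ A' : Fin 2, ∑ B : Fin 2, ∑ B' : Fin 2, ∑ Dd : Fin 2, ∑ D' : Fin 2,
        D.ginv A A' x * D.ginv B B' x * D.ginv Dd D' x
          * D.d2 (D.Cten c cb) B' A B x * D.d2 (D.Cten c cb) Dd A' D' x) := by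
  exact aux_key (fun i j => D.ginv i j x) (fun i j k => D.d2 (D.Cten c cb) i j k x)
    (congrFun (D.ginv_symm 1 0) x) (fun A => aux_trace_dC D c cb A x)
end
end

section
/- Let $Y^A$ be a Killing vector field on the round unit sphere (so $\mathring\nabla^A Y^B = -\mathring\nabla^B Y^A$, $\mathring\nabla_A Y^A = 0$, $\mathring\Delta Y^A = -Y^A$) and $u$ a smooth function on $S^2$. Then $\int_{S^2}(\mathring\Delta+2)u\;Y^A\mathring\nabla_A u\;d\mu = 0$. -/
open scoped BigOperators

noncomputable section

/-- Auxiliary: `P = Y^A ∇_A u` in lowered form. -/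
def myP (D : Sphere2) (Y : Fin 2 → D.Pt → ℝ) (u : D.Pt → ℝ) : D.Pt → ℝ :=
  fun x => ∑ B : Fin 2, ∑ C : Fin 2, D.ginv B C x * (D.d0 u B x * Y C x)

/-- Auxiliary: `Q = |∇u|²`. -/
def myQ (D : Sphere2) (u : D.Pt → ℝ) : D.Pt → ℝ :=
  fun x => ∑ B : Fin 2, ∑ C : Fin 2, D.ginv B C x * (D.d0 u B x * D.d0 u C x)

/-- Auxiliary scalar `S = -(1/2)Q + u²`. -/
def myS (D : Sphere2) (u : D.Pt → ℝ) : D.Pt → ℝ :=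
  fun x => -(1/2) * myQ D u x + u x * u x

/-- Auxiliary covector `ω_B = P ∇_B u + S Y_B`. -/
def myW (D : Sphere2) (Y : Fin 2 → D.Pt → ℝ) (u : D.Pt → ℝ) : Fin 2 → D.Pt → ℝ :=
  fun B x => myP D Y u x * D.d0 u B x + myS D u x * Y B x

lemma myP_deriv (D : Sphere2) (Y : Fin 2 → D.Pt → ℝ) (u : D.Pt → ℝ) (A : Fin 2) (x : D.Pt) :
    D.d0 (myP D Y u) A x
      = ∑ B : Fin 2, ∑ C : Fin 2, D.ginv B C x *
          (D.d1 (D.d0 u) A B x * Y C x + D.d0 u B x * D.d1 Y A C x) := by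
  have h2 := D.ginv_contract_d0 (fun B C y => D.d0 u B y * Y C y) A x
  rw [D.d2_tensor (D.d0 u) Y] at h2
  exact h2

lemma myQ_deriv (D : Sphere2) (u : D.Pt → ℝ) (A : Fin 2) (x : D.Pt) :
    D.d0 (myQ D u) A x
      = ∑ B : Fin 2, ∑ C : Fin 2, D.ginv B C x *
          (D.d1 (D.d0 u) A B x * D.d0 u C x + D.d0 u B x * D.d1 (D.d0 u) A C x) := by
  have h2 := D.ginv_contract_d0 (fun B C y => D.d0 u B y * D.d0 u C y) A x
  rw [D.d2_tensor (D.d0 u) (D.d0 u)] at h2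
  exact h2

lemma myS_deriv (D : Sphere2) (u : D.Pt → ℝ) (A : Fin 2) (x : D.Pt) :
    D.d0 (myS D u) A x
      = -(1/2) * D.d0 (myQ D u) A x + (D.d0 u A x * u x + u x * D.d0 u A x) := by
  have e1 := D.d0_add (fun y => -(1/2) * myQ D u y) (fun y => u y * u y)
  have e2 := D.d0_mul (fun _ => (-(1/2) : ℝ)) (myQ D u)
  have e3 := D.d0_mul u u
  have e4 := D.d0_const (-(1/2) : ℝ)
  have h : D.d0 (myS D u) A x
      = D.d0 (fun y => -(1/2) * myQ D u y) A x + D.d0 (fun y => u y * u y) A x :=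
    congrFun (congrFun e1 A) x
  rw [h, congrFun (congrFun e2 A) x, congrFun (congrFun e3 A) x,
    congrFun (congrFun e4 A) x]
  ring

lemma myW_deriv (D : Sphere2) (Y : Fin 2 → D.Pt → ℝ) (u : D.Pt → ℝ)
    (A B : Fin 2) (x : D.Pt) :
    D.d1 (myW D Y u) A B x
      = D.d0 (myP D Y u) A x * D.d0 u B x + myP D Y u x * D.d1 (D.d0 u) A B x
        + (D.d0 (myS D u) A x * Y B x + myS D u x * D.d1 Y A B x) := by
  have e1 := D.d1_add (fun B x => myP D Y u x * D.d0 u B x) (fun B x => myS D u x * Y B x)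
  have e2 := D.d1_fun_smul (myP D Y u) (D.d0 u)
  have e3 := D.d1_fun_smul (myS D u) Y
  have h : D.d1 (myW D Y u) A B x
      = D.d1 (fun B x => myP D Y u x * D.d0 u B x) A B x
        + D.d1 (fun B x => myS D u x * Y B x) A B x :=
    congrFun (congrFun (congrFun e1 A) B) x
  rw [h, congrFun (congrFun (congrFun e2 A) B) x,
    congrFun (congrFun (congrFun e3 A) B) x]

/-- For any Killing field `Y^A` on the round unit sphere (`∇̊^A Y^B = -∇̊^B Y^A`,
`∇̊_A Y^A = 0`, `Δ̊ Y^A = -Y^A`) and any smooth function `u`: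
`∫_{S²} (Δ̊+2) u · Y^A ∇̊_A u dμ = 0`. -/
theorem stmt_15 (D : Sphere2) (Y : Fin 2 → D.Pt → ℝ) (u : D.Pt → ℝ)
    (hKill : ∀ A B : Fin 2, ∀ x, D.d1 Y A B x = - D.d1 Y B A x)
    (hdiv : ∀ x, (∑ A : Fin 2, ∑ B : Fin 2, D.ginv A B x * D.d1 Y A B x) = 0)
    (hlap : ∀ A : Fin 2, ∀ x,
      (∑ E : Fin 2, ∑ E' : Fin 2, D.ginv E E' x * D.d2 (D.d1 Y) E E' A x) = - Y A x) :
    D.integral (fun x => (D.lap u x + 2 * u x) *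
      (∑ A : Fin 2, ∑ B : Fin 2, D.ginv A B x * Y B x * D.d0 u A x)) = 0 := by
  have key : (fun x => (D.lap u x + 2 * u x) *
      (∑ A : Fin 2, ∑ B : Fin 2, D.ginv A B x * Y B x * D.d0 u A x))
      = (fun x => ∑ A : Fin 2, ∑ B : Fin 2, D.ginv A B x * D.d1 (myW D Y u) A B x) := by
    funext x
    have hg : D.ginv 1 0 = D.ginv 0 1 := D.ginv_symm 1 0
    have hh : D.d1 (D.d0 u) 1 0 x = D.d1 (D.d0 u) 0 1 x := D.hess_symm u 1 0 x
    have hk : D.d1 Y 1 0 x = - D.d1 Y 0 1 x := hKill 1 0 x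
    have hk0 : D.d1 Y 0 0 x = 0 := by have := hKill 0 0 x; linarith
    have hk1 : D.d1 Y 1 1 x = 0 := by have := hKill 1 1 x; linarith
    simp only [myW_deriv, myP_deriv, myQ_deriv, myS_deriv, Sphere2.lap, Sphere2.hess,
      myP, myQ, myS, Fin.sum_univ_two]
    rw [hg, hh, hk, hk0, hk1]
    ring
  rw [key]
  exact D.divergence_thm (myW D Y u)
end
end
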